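/- Let θ₁, θ₂, α₁, α₂ be real numbers and k₁, k₂ integers such that αᵢ ∈ (−π, π] and θᵢ − αᵢ = 2π·kᵢ for i = 1, 2, and |θ₁ − θ₂| ≤ π. Then: (i) if α₂ − α₁ > π then k₂ = k₁ − 1; (ii) if α₂ − α₁ < −π then k₂ = k₁ + 1; (iii) if |α₂ − α₁| < π then k₂ = k₁. -/
import Mathlib


/-- If `αᵢ ∈ (−π, π]`, `θᵢ − αᵢ = 2πkᵢ` with `kᵢ ∈ ℤ`, and
`|θ₁ − θ₂| ≤ π`, then: (i) `α₂ − α₁ > π → k₂ = k₁ − 1`;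
(ii) `α₂ − α₁ < −π → k₂ = k₁ + 1`; (iii) `|α₂ − α₁| < π → k₂ = k₁`. -/
theorem stmt18 (θ₁ θ₂ α₁ α₂ : ℝ) (k₁ k₂ : ℤ)
    (hα₁ : α₁ ∈ Set.Ioc (-Real.pi) Real.pi)
    (hα₂ : α₂ ∈ Set.Ioc (-Real.pi) Real.pi)
    (h₁ : θ₁ - α₁ = 2 * Real.pi * (k₁ : ℝ))
    (h₂ : θ₂ - α₂ = 2 * Real.pi * (k₂ : ℝ))
    (hθ : |θ₁ - θ₂| ≤ Real.pi) :
    (Real.pi < α₂ - α₁ → k₂ = k₁ - 1) ∧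
    (α₂ - α₁ < -Real.pi → k₂ = k₁ + 1) ∧
    (|α₂ - α₁| < Real.pi → k₂ = k₁) := by
  have hπ := Real.pi_pos
  obtain ⟨ha1, ha2⟩ := hα₁
  obtain ⟨hb1, hb2⟩ := hα₂
  obtain ⟨ha, hb⟩ := abs_le.mp hθ
  have key : 2 * Real.pi * ((k₂ : ℝ) - k₁) = (θ₂ - θ₁) - (α₂ - α₁) := by
    nlinarith
  refine ⟨fun h => ?_, fun h => ?_, fun h => ?_⟩
  · have h1 : ((k₂ : ℝ) - k₁) < 0 := by nlinarith
    have h2 : (-2 : ℝ) < ((k₂ : ℝ) - k₁) := by nlinarith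
    have h1' : k₂ - k₁ < 0 := by exact_mod_cast h1
    have h2' : (-2 : ℤ) < k₂ - k₁ := by exact_mod_cast h2
    omega
  · have h1 : (0 : ℝ) < ((k₂ : ℝ) - k₁) := by nlinarith
    have h2 : ((k₂ : ℝ) - k₁) < 2 := by nlinarith
    have h1' : (0 : ℤ) < k₂ - k₁ := by exact_mod_cast h1
    have h2' : k₂ - k₁ < 2 := by exact_mod_cast h2
    omega
  · obtain ⟨hc, hd⟩ := abs_lt.mp h
    have h1 : (-1 : ℝ) < ((k₂ : ℝ) - k₁) := by nlinarith
    have h2 : ((k₂ : ℝ) - k₁) < 1 := by nlinarith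
    have h1' : (-1 : ℤ) < k₂ - k₁ := by exact_mod_cast h1
    have h2' : k₂ - k₁ < 1 := by exact_mod_cast h2
    omega
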